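/- Let n be a positive integer and let ρ, σ ∈ M_n(ℂ) be Hermitian idempotents (ρ* = ρ, ρ² = ρ, σ* = σ, σ² = σ) with ρσ = σρ, and set τ := ρσ. Assume Tr(τ) = 1. Then for all matrices α, γ ∈ M_n(ℂ) such that ασ = σα and γρ = ργ, one has Tr(τ · α · γ) = Tr(τ · α) · Tr(τ · γ). -/

import Mathlib

open Matrix

variable {n : ℕ}

lemma vmv_key (u v : Fin n → ℂ) (X : Matrix (Fin n) (Fin n) ℂ) :
    vecMulVec u v * X * vecMulVec u v = (vecMulVec u v * X).trace • vecMulVec u v := by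
  ext j k
  simp only [mul_apply, vecMulVec_apply, trace, diag_apply, Matrix.smul_apply, smul_eq_mul,
    Finset.sum_mul, Finset.mul_sum]
  congr 1; ext a; congr 1; ext b; ring

lemma diag_single (U V : Matrix (Fin n) (Fin n) ℂ) (i : Fin n) :
    U * diagonal (Pi.single i 1) * V = vecMulVec (fun j => U j i) (fun k => V i k) := by
  ext j k
  simp [mul_apply, diagonal_apply, Pi.single_apply, vecMulVec_apply, Finset.sum_ite_eq,
    Finset.mul_sum, mul_ite]

lemma rank_one_decomp (τ : Matrix (Fin n) (Fin n) ℂ) (hH : τ.IsHermitian)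
    (h2 : τ * τ = τ) (htr : τ.trace = 1) :
    ∃ u v : Fin n → ℂ, τ = vecMulVec u v := by
  classical
  set U : Matrix (Fin n) (Fin n) ℂ := (hH.eigenvectorUnitary : Matrix (Fin n) (Fin n) ℂ) with hU
  set e := hH.eigenvalues with he
  have hsp : τ = U * diagonal ((fun x : ℝ => (x:ℂ)) ∘ e) * star U := hH.spectral_theorem
  have hD : star U * τ * U = diagonal ((fun x : ℝ => (x:ℂ)) ∘ e) := by
    have h' : star U * U = 1 := (Matrix.mem_unitaryGroup_iff').mp hH.eigenvectorUnitary.2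
    calc star U * τ * U = (star U * U) * diagonal ((fun x : ℝ => (x:ℂ)) ∘ e) * (star U * U) := by
          rw [hsp]; simp only [mul_assoc]
      _ = diagonal ((fun x : ℝ => (x:ℂ)) ∘ e) := by rw [h', one_mul, mul_one]
  have hUU : U * star U = 1 := (Matrix.mem_unitaryGroup_iff).mp hH.eigenvectorUnitary.2
  have hUU' : star U * U = 1 := (Matrix.mem_unitaryGroup_iff').mp hH.eigenvectorUnitary.2
  -- eigenvalues are idempotent
  have hDD : diagonal ((fun x : ℝ => (x:ℂ)) ∘ e) * diagonal ((fun x : ℝ => (x:ℂ)) ∘ e)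
      = diagonal ((fun x : ℝ => (x:ℂ)) ∘ e) := by
    rw [← hD]
    calc star U * τ * U * (star U * τ * U)
        = star U * τ * (U * star U) * τ * U := by noncomm_ring
      _ = star U * (τ * τ) * U := by rw [hUU]; noncomm_ring
      _ = star U * τ * U := by rw [h2]
  have hidem : ∀ i, e i * e i = e i := by
    intro i
    have := congrFun (congrFun hDD i) i
    simp [diagonal_apply, mul_apply] at this
    exact_mod_cast this
  have h01 : ∀ i, e i = 0 ∨ e i = 1 := by
    intro i
    have h0 : e i * (e i - 1) = 0 := by have := hidem i; ring_nf; linarith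
    rcases mul_eq_zero.mp h0 with h | h
    · exact Or.inl h
    · right; linarith
  -- trace
  have hsum : ∑ i, e i = 1 := by
    have : τ.trace = ∑ i, (e i : ℂ) := by
      rw [hsp, Matrix.trace_mul_cycle, hUU', one_mul, trace_diagonal]
      simp
    rw [htr] at this
    exact_mod_cast this.symm
  set s := Finset.univ.filter (fun i => e i = 1) with hs
  have hcard : (s.card : ℝ) = 1 := by
    rw [← hsum, ← Finset.sum_filter_add_sum_filter_not Finset.univ (fun i => e i = 1) e]
    have ha : ∑ i ∈ Finset.univ.filter (fun i => e i = 1), e i = s.card := by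
      rw [Finset.sum_congr rfl (fun i hi => (Finset.mem_filter.mp hi).2)]
      simp [hs]
    have hb : ∑ i ∈ Finset.univ.filter (fun i => ¬ e i = 1), e i = 0 := by
      apply Finset.sum_eq_zero
      intro i hi
      exact (h01 i).resolve_right (Finset.mem_filter.mp hi).2
    rw [ha, hb, add_zero]
  have hcard' : s.card = 1 := by exact_mod_cast hcard
  obtain ⟨i, hi⟩ := Finset.card_eq_one.mp hcard'
  have hei : e i = 1 := by
    have : i ∈ s := hi ▸ Finset.mem_singleton_self i
    simpa [hs] using this
  have hsingle : ((fun x : ℝ => (x:ℂ)) ∘ e) = Pi.single i 1 := by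
    funext j
    by_cases hj : j = i
    · subst hj; simp [hei]
    · have hjs : j ∉ s := by rw [hi]; simp [hj]
      have hne : ¬ e j = 1 := by simpa [hs] using hjs
      have hz : e j = 0 := (h01 j).resolve_right hne
      simp [Pi.single_apply, hj, hz]
  refine ⟨fun j => U j i, fun k => (star U) i k, ?_⟩
  rw [hsp, hsingle, diag_single]


/-- Trace factorisation in a pure-state commutator bilocal quantum model:
for commuting Hermitian idempotents `ρ`, `σ` with `Tr(ρσ) = 1`, and matrices `α`
commuting with `σ` and `γ` commuting with `ρ`, the trace of `ρσ·α·γ` factorises. -/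
theorem stmt0 (n : ℕ) (hn : 0 < n) (ρ σ : Matrix (Fin n) (Fin n) ℂ)
    (hρH : ρᴴ = ρ) (hρ2 : ρ * ρ = ρ) (hσH : σᴴ = σ) (hσ2 : σ * σ = σ)
    (hcomm : ρ * σ = σ * ρ) (htr : (ρ * σ).trace = 1) :
    ∀ α γ : Matrix (Fin n) (Fin n) ℂ, α * σ = σ * α → γ * ρ = ρ * γ →
      (ρ * σ * α * γ).trace = (ρ * σ * α).trace * (ρ * σ * γ).trace := by
  intro α γ hα hγ
  have hτH : (ρ * σ).IsHermitian := by
    show (ρ * σ)ᴴ = ρ * σ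
    rw [conjTranspose_mul, hρH, hσH, ← hcomm]
  have hτ2 : (ρ * σ) * (ρ * σ) = ρ * σ := by
    calc (ρ * σ) * (ρ * σ) = ρ * (σ * ρ) * σ := by noncomm_ring
      _ = ρ * (ρ * σ) * σ := by rw [hcomm]
      _ = (ρ * ρ) * (σ * σ) := by noncomm_ring
      _ = ρ * σ := by rw [hρ2, hσ2]
  obtain ⟨u, v, huv⟩ := rank_one_decomp (ρ * σ) hτH hτ2 htr
  have e1 : ρ * σ * α * (ρ * σ) * γ = (ρ * (σ * α * σ * γ)) * ρ := by
    calc ρ * σ * α * (ρ * σ) * γ = ρ * σ * α * (σ * ρ) * γ := by rw [hcomm]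
      _ = ρ * σ * α * σ * (ρ * γ) := by noncomm_ring
      _ = ρ * σ * α * σ * (γ * ρ) := by rw [← hγ]
      _ = (ρ * (σ * α * σ * γ)) * ρ := by noncomm_ring
  have e2 : ((ρ * (σ * α * σ * γ)) * ρ).trace = (ρ * σ * α * γ).trace := by
    rw [trace_mul_comm, ← mul_assoc, hρ2]
    congr 1
    calc ρ * (σ * α * σ * γ) = ρ * (σ * (α * σ) * γ) := by noncomm_ring
      _ = ρ * (σ * (σ * α) * γ) := by rw [hα]
      _ = ρ * ((σ * σ) * (α * γ)) := by noncomm_ring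
      _ = ρ * (σ * (α * γ)) := by rw [hσ2]
      _ = ρ * σ * α * γ := by noncomm_ring
  have step1 : (ρ * σ * α * γ).trace = (ρ * σ * α * (ρ * σ) * γ).trace := by
    rw [e1]; exact e2.symm
  have key : (ρ * σ) * α * (ρ * σ) = ((ρ * σ) * α).trace • (ρ * σ) := by
    rw [huv]; exact vmv_key u v α
  rw [step1, key, smul_mul_assoc, trace_smul, smul_eq_mul]
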